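/- Let f : ℝ³ → [0,∞) be measurable, not almost everywhere zero, with ∫_{ℝ³} |p| f(p) dp < ∞. Let L be an invertible real 3×3 matrix and D a nonzero diagonal real 3×3 matrix. Then the function s ↦ 16π ∫_{ℝ³} (pᵀ (Lᵀ exp(sD) L) p)^{1/2} f(p) dp is strictly convex on ℝ (here exp denotes the matrix exponential). -/

import Mathlib

open MeasureTheory Matrix Real Filter Topology Set Asymptotics

noncomputable section

/-- 3×3 real matrices; symmetric ones form `Sym3`, encoded via `Matrix.IsSymm`/`Matrix.PosDef`. -/
abbrev Mat3 := Matrix (Fin 3) (Fin 3) ℝ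

/-- vectors in ℝ³ -/
abbrev Vec3 := Fin 3 → ℝ

/-- Euclidean norm on ℝ³. -/
def enorm3 (p : Vec3) : ℝ := Real.sqrt (∑ i, p i ^ 2)

/-- the quadratic form pᵀBp. -/
def quadForm (B : Mat3) (p : Vec3) : ℝ := p ⬝ᵥ B.mulVec p

/-- Ψ(B)_{ij} = 4π (det B)^{1/2} ∫ (pᵀBp)^{−1/2} p_i p_j f(p) dp. -/
def PsiM (f : Vec3 → ℝ) (B : Mat3) : Mat3 :=
  Matrix.of fun i j =>
    (4 * π) * Real.sqrt B.det * ∫ p : Vec3, (Real.sqrt (quadForm B p))⁻¹ * (p i * p j * f p)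

/-- χ_b(k)_{ij} = 4π (det b)^{1/2} ∫ (pᵀbp)^{−3/2} ((bp)ᵀ k (bp)) p_i p_j f(p) dp. -/
def chiM (f : Vec3 → ℝ) (b : Mat3) (k : Mat3) : Mat3 :=
  Matrix.of fun i j =>
    (4 * π) * Real.sqrt b.det *
      ∫ p : Vec3, ((Real.sqrt (quadForm b p))⁻¹ ^ 3) * (quadForm k (b.mulVec p) * (p i * p j * f p))

/-- With u = ah, w = kh, α = hᵀah and b = a⁻¹:
M_a(k) = (2/det a)((hᵀkh) a + α k − 2(u wᵀ + w uᵀ) + tr(bk)(2 u uᵀ − α a)). -/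
def MM (a : Mat3) (h : Vec3) (k : Mat3) : Mat3 :=
  (2 / a.det) • ((h ⬝ᵥ k.mulVec h) • a + (h ⬝ᵥ a.mulVec h) • k
    - (2:ℝ) • (vecMulVec (a.mulVec h) (k.mulVec h) + vecMulVec (k.mulVec h) (a.mulVec h))
    + (a⁻¹ * k).trace • ((2:ℝ) • vecMulVec (a.mulVec h) (a.mulVec h) - (h ⬝ᵥ a.mulVec h) • a))

/-- The Fuchsian condition at B (with A = B⁻¹):
2Ψ(B) = A − (2/det A)((hᵀAh) A − 2 (Ah)(Ah)ᵀ). -/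
def FuchsCond (f : Vec3 → ℝ) (h : Vec3) (B : Mat3) : Prop :=
  (2:ℝ) • PsiM f B =
    B⁻¹ - (2 / (B⁻¹).det) •
      ((h ⬝ᵥ (B⁻¹).mulVec h) • B⁻¹ - (2:ℝ) • vecMulVec ((B⁻¹).mulVec h) ((B⁻¹).mulVec h))

/-- F(B) = 16π ∫ (pᵀBp)^{1/2} f dp + 2 (det B)^{−1/2} + 4 (det B)^{1/2} hᵀB⁻¹h. -/
def Ffun (f : Vec3 → ℝ) (h : Vec3) (B : Mat3) : ℝ :=
  16 * π * (∫ p : Vec3, Real.sqrt (quadForm B p) * f p)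
    + 2 * (Real.sqrt B.det)⁻¹ + 4 * Real.sqrt B.det * (h ⬝ᵥ (B⁻¹).mulVec h)

/-- strict geodesic convexity of the kinetic term of F:
s ↦ 16π ∫ (pᵀ(Lᵀ exp(sD) L)p)^{1/2} f dp is strictly convex on ℝ. -/
def Gfun (c d : Fin 3 → ℝ) (s : ℝ) : ℝ := ∑ i, c i * Real.exp (d i * s)

lemma Gfun_hasDerivAt (c d : Fin 3 → ℝ) (s : ℝ) :
    HasDerivAt (Gfun c d) (Gfun (fun i => c i * d i) d s) s := by
  have h : ∀ i ∈ (Finset.univ : Finset (Fin 3)),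
      HasDerivAt (fun t => c i * Real.exp (d i * t)) (c i * d i * Real.exp (d i * s)) s := by
    intro i _
    have h1 : HasDerivAt (fun t : ℝ => d i * t) (d i) s := by
      simpa using (hasDerivAt_id s).const_mul (d i)
    have h2 := (h1.exp).const_mul (c i)
    rw [show c i * d i * Real.exp (d i * s) = c i * (Real.exp (d i * s) * d i) by ring]
    exact h2
  have := HasDerivAt.fun_sum h
  simp only [Gfun]
  exact this

lemma Gfun_continuous (c d : Fin 3 → ℝ) : Continuous (Gfun c d) :=
  continuous_finset_sum _ fun i _ =>
    continuous_const.mul ((continuous_const.mul continuous_id).rexp)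

lemma Gfun_pos (c d : Fin 3 → ℝ) (hc : ∀ i, 0 ≤ c i) (j : Fin 3) (hj : 0 < c j) (s : ℝ) :
    0 < Gfun c d s := by
  apply Finset.sum_pos' (fun i _ => mul_nonneg (hc i) (Real.exp_pos _).le)
  exact ⟨j, Finset.mem_univ j, mul_pos hj (Real.exp_pos _)⟩

lemma Gfun_nonneg (c d : Fin 3 → ℝ) (hc : ∀ i, 0 ≤ c i) (s : ℝ) : 0 ≤ Gfun c d s :=
  Finset.sum_nonneg fun i _ => mul_nonneg (hc i) (Real.exp_pos _).le

lemma Gfun_cauchy (c d : Fin 3 → ℝ) (hc : ∀ i, 0 ≤ c i) (s : ℝ) :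
    Gfun (fun i => c i * d i) d s ^ 2
      ≤ Gfun c d s * Gfun (fun i => c i * d i * d i) d s := by
  have h := Finset.sum_mul_sq_le_sq_mul_sq Finset.univ
    (fun i => Real.sqrt (c i * Real.exp (d i * s)))
    (fun i => d i * Real.sqrt (c i * Real.exp (d i * s)))
  have key : ∀ i : Fin 3, Real.sqrt (c i * Real.exp (d i * s)) ^ 2
      = c i * Real.exp (d i * s) := fun i =>
    Real.sq_sqrt (mul_nonneg (hc i) (Real.exp_pos _).le)
  calc Gfun (fun i => c i * d i) d s ^ 2
      = (∑ i, Real.sqrt (c i * Real.exp (d i * s))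
          * (d i * Real.sqrt (c i * Real.exp (d i * s)))) ^ 2 := by
        congr 1
        apply Finset.sum_congr rfl
        intro i _
        rw [show Real.sqrt (c i * Real.exp (d i * s)) * (d i * Real.sqrt (c i * Real.exp (d i * s)))
            = d i * Real.sqrt (c i * Real.exp (d i * s)) ^ 2 from by ring, key i]
        ring
    _ ≤ (∑ i, Real.sqrt (c i * Real.exp (d i * s)) ^ 2)
        * ∑ i, (d i * Real.sqrt (c i * Real.exp (d i * s))) ^ 2 := h
    _ = Gfun c d s * Gfun (fun i => c i * d i * d i) d s := by
        congr 1
        · exact Finset.sum_congr rfl fun i _ => key i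
        · apply Finset.sum_congr rfl
          intro i _
          rw [mul_pow, key i]
          ring

section sqrtconv

variable (c d : Fin 3 → ℝ)

/-- first derivative candidate -/
def phiF (s : ℝ) : ℝ := Gfun (fun i => c i * d i) d s / (2 * Real.sqrt (Gfun c d s))

lemma sqrtG_hasDeriv (hpos : ∀ s, 0 < Gfun c d s) (s : ℝ) :
    HasDerivAt (fun t => Real.sqrt (Gfun c d t)) (phiF c d s) s :=
  (Gfun_hasDerivAt c d s).sqrt (hpos s).ne'

lemma phiF_hasDeriv (hpos : ∀ s, 0 < Gfun c d s) (s : ℝ) :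
    HasDerivAt (phiF c d)
      ((Gfun (fun i => c i * d i * d i) d s * (2 * Real.sqrt (Gfun c d s))
        - Gfun (fun i => c i * d i) d s * (2 * phiF c d s))
        / (2 * Real.sqrt (Gfun c d s)) ^ 2) s := by
  have hnum : HasDerivAt (fun t => Gfun (fun i => c i * d i) d t)
      (Gfun (fun i => c i * d i * d i) d s) s := by
    have := Gfun_hasDerivAt (fun i => c i * d i) d s
    exact this
  have hden : HasDerivAt (fun t => 2 * Real.sqrt (Gfun c d t)) (2 * phiF c d s) s :=
    (sqrtG_hasDeriv c d hpos s).const_mul 2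
  have hne : 2 * Real.sqrt (Gfun c d s) ≠ 0 := by
    have := Real.sqrt_pos.2 (hpos s)
    positivity
  exact hnum.div hden hne

lemma deriv2_eq (hpos : ∀ s, 0 < Gfun c d s) (s : ℝ) :
    deriv^[2] (fun t => Real.sqrt (Gfun c d t)) s
      = (Gfun (fun i => c i * d i * d i) d s * (2 * Real.sqrt (Gfun c d s))
        - Gfun (fun i => c i * d i) d s * (2 * phiF c d s))
        / (2 * Real.sqrt (Gfun c d s)) ^ 2 := by
  have e1 : deriv (fun t => Real.sqrt (Gfun c d t)) = phiF c d :=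
    funext fun t => (sqrtG_hasDeriv c d hpos t).deriv
  show deriv (deriv (fun t => Real.sqrt (Gfun c d t))) s = _
  rw [e1]
  exact (phiF_hasDeriv c d hpos s).deriv

lemma deriv2_val (hpos : ∀ s, 0 < Gfun c d s) (s : ℝ) :
    deriv^[2] (fun t => Real.sqrt (Gfun c d t)) s
      = (2 * Gfun c d s * Gfun (fun i => c i * d i * d i) d s
          - Gfun (fun i => c i * d i) d s ^ 2)
        / (4 * Gfun c d s * Real.sqrt (Gfun c d s)) := by
  rw [deriv2_eq c d hpos s]
  have ht : 0 < Real.sqrt (Gfun c d s) := Real.sqrt_pos.2 (hpos s)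
  have ht2 : Real.sqrt (Gfun c d s) ^ 2 = Gfun c d s := Real.sq_sqrt (hpos s).le
  rw [phiF]
  have key : ∀ A B G t : ℝ, 0 < t → t ^ 2 = G →
      (A * (2 * t) - B * (2 * (B / (2 * t)))) / (2 * t) ^ 2
        = (2 * G * A - B ^ 2) / (4 * G * t) := by
    intro A B G t htp hG
    subst hG
    field_simp
    ring
  exact key _ _ _ _ ht ht2

lemma sqrtG_strictConvexOn (hc : ∀ i, 0 ≤ c i) (hex : ∃ i, 0 < c i ∧ d i ≠ 0) :
    StrictConvexOn ℝ Set.univ (fun t => Real.sqrt (Gfun c d t)) := by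
  obtain ⟨j, hcj, hdj⟩ := hex
  have hpos : ∀ s, 0 < Gfun c d s := Gfun_pos c d hc j hcj
  have hcont : Continuous fun t => Real.sqrt (Gfun c d t) :=
    Real.continuous_sqrt.comp (Gfun_continuous c d)
  apply strictConvexOn_of_deriv2_pos' convex_univ hcont.continuousOn
  intro s _
  rw [deriv2_val c d hpos s]
  have hCS := Gfun_cauchy c d hc s
  have hG2 : 0 < Gfun (fun i => c i * d i * d i) d s := by
    apply Finset.sum_pos' (fun i _ => mul_nonneg
      (by rw [mul_assoc]; exact mul_nonneg (hc i) (mul_self_nonneg _)) (Real.exp_pos _).le)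
    refine ⟨j, Finset.mem_univ j, mul_pos ?_ (Real.exp_pos _)⟩
    rw [mul_assoc]
    exact mul_pos hcj (mul_self_pos.2 hdj)
  have hG := hpos s
  have ht : 0 < Real.sqrt (Gfun c d s) := Real.sqrt_pos.2 hG
  apply div_pos ?_ (by positivity)
  nlinarith

lemma sqrtG_convexOn (hc : ∀ i, 0 ≤ c i) :
    ConvexOn ℝ Set.univ (fun t => Real.sqrt (Gfun c d t)) := by
  by_cases hz : ∀ i, c i = 0
  · have : (fun t => Real.sqrt (Gfun c d t)) = fun _ => 0 := by
      funext t
      simp [Gfun, hz]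
    rw [this]
    exact convexOn_const 0 convex_univ
  · push_neg at hz
    obtain ⟨j, hj⟩ := hz
    have hcj : 0 < c j := (hc j).lt_of_ne (Ne.symm hj)
    have hpos : ∀ s, 0 < Gfun c d s := Gfun_pos c d hc j hcj
    apply convexOn_of_deriv2_nonneg' convex_univ
      (fun s _ => ((sqrtG_hasDeriv c d hpos s).differentiableAt).differentiableWithinAt)
      ?_ ?_
    · intro s _
      have e1 : deriv (fun t => Real.sqrt (Gfun c d t)) = phiF c d :=
        funext fun t => (sqrtG_hasDeriv c d hpos t).deriv
      rw [e1]
      exact ((phiF_hasDeriv c d hpos s).differentiableAt).differentiableWithinAt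
    · intro s _
      rw [deriv2_val c d hpos s]
      have hCS := Gfun_cauchy c d hc s
      have hG2 : 0 ≤ Gfun (fun i => c i * d i * d i) d s :=
        Gfun_nonneg _ d (fun i => by
          rw [mul_assoc]; exact mul_nonneg (hc i) (mul_self_nonneg _)) s
      have hG := hpos s
      have ht : 0 < Real.sqrt (Gfun c d s) := Real.sqrt_pos.2 hG
      apply div_nonneg ?_ (by positivity)
      nlinarith

end sqrtconv

lemma quadForm_exp_eq (L D : Mat3) (hD : D.IsDiag) (s : ℝ) (p : Vec3) :
    quadForm (Lᵀ * NormedSpace.exp (s • D) * L) p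
      = Gfun (fun i => (L.mulVec p) i ^ 2) (fun i => D i i) s := by
  have hdiag : s • D = diagonal (fun i => s * D i i) := by
    conv_lhs => rw [← hD.diagonal_diag]
    rw [← diagonal_smul]
    rfl
  have hexp : NormedSpace.exp (s • D) = diagonal (fun i => Real.exp (s * D i i)) := by
    rw [hdiag, Matrix.exp_diagonal, Pi.exp_def]
    congr 1
    funext i
    rw [← Real.exp_eq_exp_ℝ]
  rw [hexp]
  unfold quadForm Gfun
  rw [Matrix.mul_assoc, ← mulVec_mulVec, dotProduct_mulVec, vecMul_transpose,
    ← mulVec_mulVec]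
  simp only [dotProduct, mulVec_diagonal]
  apply Finset.sum_congr rfl
  intro i _
  rw [mul_comm (D i i) s]
  ring

lemma enorm3_nonneg (p : Vec3) : 0 ≤ enorm3 p := Real.sqrt_nonneg _

lemma sqrt_quad_le (L D : Mat3) (s : ℝ) (p : Vec3) :
    Real.sqrt (Gfun (fun i => (L.mulVec p) i ^ 2) (fun i => D i i) s)
      ≤ (Real.sqrt (∑ i, Real.exp (D i i * s))
          * Real.sqrt (∑ i, ∑ k, L i k ^ 2)) * enorm3 p := by
  set q := L.mulVec p with hq
  have h1 : Gfun (fun i => q i ^ 2) (fun i => D i i) s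
      ≤ (∑ i, Real.exp (D i i * s)) * ∑ i, q i ^ 2 := by
    unfold Gfun
    rw [Finset.sum_mul]
    apply Finset.sum_le_sum
    intro i _
    have h4 : q i ^ 2 ≤ ∑ k, q k ^ 2 :=
      Finset.single_le_sum (f := fun k => q k ^ 2) (fun k _ => sq_nonneg _) (Finset.mem_univ i)
    show q i ^ 2 * Real.exp (D i i * s) ≤ Real.exp (D i i * s) * ∑ k, q k ^ 2
    nlinarith [Real.exp_pos (D i i * s), sq_nonneg (q i)]
  have h3 : ∑ i, q i ^ 2 ≤ (∑ i, ∑ k, L i k ^ 2) * ∑ k, p k ^ 2 := by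
    rw [Finset.sum_mul]
    apply Finset.sum_le_sum
    intro i _
    have := Finset.sum_mul_sq_le_sq_mul_sq Finset.univ (fun k => L i k) p
    calc q i ^ 2 = (∑ k, L i k * p k) ^ 2 := by rw [hq]; rfl
      _ ≤ (∑ k, L i k ^ 2) * ∑ k, p k ^ 2 := this
  calc Real.sqrt (Gfun (fun i => q i ^ 2) (fun i => D i i) s)
      ≤ Real.sqrt ((∑ i, Real.exp (D i i * s)) * ((∑ i, ∑ k, L i k ^ 2) * ∑ k, p k ^ 2)) := by
        apply Real.sqrt_le_sqrt
        calc Gfun (fun i => q i ^ 2) (fun i => D i i) s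
            ≤ (∑ i, Real.exp (D i i * s)) * ∑ i, q i ^ 2 := h1
          _ ≤ _ := by
              apply mul_le_mul_of_nonneg_left h3
              exact Finset.sum_nonneg fun i _ => (Real.exp_pos _).le
    _ = (Real.sqrt (∑ i, Real.exp (D i i * s)) * Real.sqrt (∑ i, ∑ k, L i k ^ 2)) * enorm3 p := by
        rw [Real.sqrt_mul (Finset.sum_nonneg fun i _ => (Real.exp_pos _).le),
          Real.sqrt_mul (show (0:ℝ) ≤ ∑ i, ∑ k, L i k ^ 2 from
            Finset.sum_nonneg fun i _ => Finset.sum_nonneg fun k _ => sq_nonneg _),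
          mul_assoc]
        rfl

lemma null_dot (w : Vec3) (hw : w ≠ 0) : volume {p : Vec3 | w ⬝ᵥ p = 0} = 0 := by
  let ℓ : Vec3 →ₗ[ℝ] ℝ :=
    { toFun := fun p => w ⬝ᵥ p
      map_add' := fun x y => by simp [dotProduct_add]
      map_smul' := fun c x => by simp [dotProduct_smul] }
  have hker : LinearMap.ker ℓ ≠ ⊤ := by
    intro htop
    have hmem : w ∈ LinearMap.ker ℓ := htop ▸ Submodule.mem_top
    have : w ⬝ᵥ w = 0 := hmem
    exact hw ((dotProduct_self_eq_zero).1 this)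
  have := MeasureTheory.Measure.addHaar_submodule (volume : Measure Vec3)
    (LinearMap.ker ℓ) hker
  convert this using 2
  ext p
  rfl

lemma cont_mulVec (L : Mat3) (i : Fin 3) : Continuous fun p : Vec3 => L.mulVec p i := by
  have h : (fun p : Vec3 => L.mulVec p i) = fun p => ∑ k, L i k * p k := rfl
  rw [h]
  exact continuous_finset_sum _ fun k _ => continuous_const.mul (continuous_apply k)

lemma integrable_main (f : Vec3 → ℝ) (hmeas : Measurable f) (hnonneg : ∀ p, 0 ≤ f p)
    (hint : Integrable (fun p : Vec3 => enorm3 p * f p)) (L D : Mat3) (s : ℝ) :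
    Integrable (fun p : Vec3 =>
      Real.sqrt (Gfun (fun i => (L.mulVec p) i ^ 2) (fun i => D i i) s) * f p) := by
  have hcont : Continuous (fun p : Vec3 =>
      Real.sqrt (Gfun (fun i => (L.mulVec p) i ^ 2) (fun i => D i i) s)) := by
    apply Real.continuous_sqrt.comp
    have h : (fun p : Vec3 => Gfun (fun i => (L.mulVec p) i ^ 2) (fun i => D i i) s)
        = fun p => ∑ i, (L.mulVec p) i ^ 2 * Real.exp (D i i * s) := rfl
    rw [h]
    exact continuous_finset_sum _ fun i _ => ((cont_mulVec L i).pow 2).mul continuous_const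
  set C := Real.sqrt (∑ i, Real.exp (D i i * s)) * Real.sqrt (∑ i, ∑ k, L i k ^ 2) with hC
  have hC0 : 0 ≤ C := mul_nonneg (Real.sqrt_nonneg _) (Real.sqrt_nonneg _)
  refine (hint.const_mul C).mono ?_ ?_
  · exact hcont.aestronglyMeasurable.mul hmeas.aestronglyMeasurable
  filter_upwards with p
  rw [Real.norm_eq_abs, Real.norm_eq_abs,
    abs_of_nonneg (mul_nonneg (Real.sqrt_nonneg _) (hnonneg p)),
    abs_of_nonneg (mul_nonneg hC0 (mul_nonneg (enorm3_nonneg p) (hnonneg p)))]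
  calc Real.sqrt (Gfun (fun i => (L.mulVec p) i ^ 2) (fun i => D i i) s) * f p
      ≤ (C * enorm3 p) * f p :=
        mul_le_mul_of_nonneg_right (sqrt_quad_le L D s p) (hnonneg p)
    _ = C * (enorm3 p * f p) := by ring

theorem kinetic_term_strictly_geodesically_convex (f : Vec3 → ℝ)
    (hmeas : Measurable f) (hnonneg : ∀ p, 0 ≤ f p) (hne : ¬ f =ᵐ[volume] 0)
    (hint : Integrable (fun p : Vec3 => enorm3 p * f p))
    (L D : Mat3) (hL : IsUnit L) (hD : D.IsDiag) (hD0 : D ≠ 0) :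
    StrictConvexOn ℝ Set.univ
      (fun s : ℝ => 16 * π * ∫ p : Vec3,
        Real.sqrt (quadForm (Lᵀ * NormedSpace.exp (s • D) * L) p) * f p) := by
  obtain ⟨j, hj⟩ : ∃ j, D j j ≠ 0 := by
    by_contra hall
    push_neg at hall
    apply hD0
    ext i k
    rcases eq_or_ne i k with rfl | hik
    · simpa using hall i
    · simpa using hD hik
  have hrw : (fun s : ℝ => 16 * π * ∫ p : Vec3,
        Real.sqrt (quadForm (Lᵀ * NormedSpace.exp (s • D) * L) p) * f p)
      = fun s : ℝ => 16 * π * ∫ p : Vec3,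
        Real.sqrt (Gfun (fun i => (L.mulVec p) i ^ 2) (fun i => D i i) s) * f p := by
    funext s
    congr 1
    apply integral_congr_ae
    filter_upwards with p
    rw [quadForm_exp_eq L D hD s p]
  rw [hrw]
  set g : Vec3 → ℝ → ℝ :=
    fun p s => Real.sqrt (Gfun (fun i => (L.mulVec p) i ^ 2) (fun i => D i i) s) with hgdef
  have hInt : ∀ s, Integrable (fun p => g p s * f p) :=
    fun s => integrable_main f hmeas hnonneg hint L D s
  have hconv : ∀ p, ConvexOn ℝ Set.univ (g p) :=
    fun p => sqrtG_convexOn _ _ (fun i => sq_nonneg _)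
  have hstrict : ∀ p : Vec3, (L.mulVec p) j ≠ 0 → StrictConvexOn ℝ Set.univ (g p) := by
    intro p hp
    exact sqrtG_strictConvexOn _ _ (fun i => sq_nonneg _)
      ⟨j, lt_of_le_of_ne (sq_nonneg _) (Ne.symm (pow_ne_zero 2 hp)), hj⟩
  have hZ : volume {p : Vec3 | (L.mulVec p) j = 0} = 0 := by
    have hwne : (fun k => L j k) ≠ 0 := by
      intro h0
      have hdet : L.det = 0 := Matrix.det_eq_zero_of_row_eq_zero j (fun k => congrFun h0 k)
      have hu := (Matrix.isUnit_iff_isUnit_det L).1 hL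
      rw [hdet] at hu
      simpa using hu
    exact null_dot (fun k => L j k) hwne
  have hS : volume {p : Vec3 | f p ≠ 0} ≠ 0 := by
    intro h0
    apply hne
    rw [Filter.EventuallyEq, ae_iff]
    simpa using h0
  refine ⟨convex_univ, ?_⟩
  intro x _ y _ hxy a b ha hb hab
  simp only [smul_eq_mul]
  have hpt : ∀ p, g p (a * x + b * y) * f p ≤ a * (g p x * f p) + b * (g p y * f p) := by
    intro p
    have h := (hconv p).2 (Set.mem_univ x) (Set.mem_univ y) ha.le hb.le hab
    simp only [smul_eq_mul] at h
    nlinarith [hnonneg p]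
  set u : Vec3 → ℝ :=
    fun p => a * (g p x * f p) + b * (g p y * f p) - g p (a * x + b * y) * f p with hudef
  have hu_int : Integrable u :=
    ((((hInt x).const_mul a)).add ((hInt y).const_mul b)).sub (hInt (a * x + b * y))
  have hu_nonneg : ∀ p, 0 ≤ u p := fun p => by
    have := hpt p
    simp only [hudef]
    linarith
  have hsupp : {p : Vec3 | f p ≠ 0} \ {p : Vec3 | (L.mulVec p) j = 0} ⊆ Function.support u := by
    intro p hp
    obtain ⟨hpf, hpz⟩ := hp
    have hfp : 0 < f p := (hnonneg p).lt_of_ne (Ne.symm hpf)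
    have h := (hstrict p hpz).2 (Set.mem_univ x) (Set.mem_univ y) hxy ha hb hab
    simp only [smul_eq_mul] at h
    have : 0 < u p := by
      simp only [hudef]
      nlinarith
    exact fun h0 => this.ne' h0
  have hμ : 0 < volume (Function.support u) := by
    have h1 : volume ({p : Vec3 | f p ≠ 0} \ {p : Vec3 | (L.mulVec p) j = 0})
        = volume {p : Vec3 | f p ≠ 0} := measure_diff_null hZ
    have h2 : (0 : ENNReal) < volume ({p : Vec3 | f p ≠ 0} \ {p : Vec3 | (L.mulVec p) j = 0}) := by
      rw [h1]; exact pos_iff_ne_zero.2 hS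
    exact lt_of_lt_of_le h2 (measure_mono hsupp)
  have hIu : 0 < ∫ p, u p :=
    (integral_pos_iff_support_of_nonneg_ae (Eventually.of_forall hu_nonneg) hu_int).2 hμ
  have hIu_eq : ∫ p, u p
      = a * (∫ p, g p x * f p) + b * (∫ p, g p y * f p) - ∫ p, g p (a * x + b * y) * f p := by
    have hA : Integrable (fun p : Vec3 => a * (g p x * f p) + b * (g p y * f p)) :=
      ((hInt x).const_mul a).add ((hInt y).const_mul b)
    simp only [hudef]
    rw [integral_sub hA (hInt (a * x + b * y)),
      integral_add ((hInt x).const_mul a) ((hInt y).const_mul b),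
      integral_const_mul, integral_const_mul]
  rw [hIu_eq] at hIu
  have h16 : (0 : ℝ) < 16 * π := by positivity
  nlinarith [hIu, h16]
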